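/- The map Γ₀ : PJ₃ × H → H defined by Γ₀(g, h) = g·h if g·h ∈ H and Γ₀(g, h) = g·h·s₁₃ otherwise, is well defined (its values always lie in H) and defines a group action of PJ₃ on H; that is, Γ₀(1, h) = h for all h ∈ H, and Γ₀(g₁·g₂, h) = Γ₀(g₁, Γ₀(g₂, h)) for all g₁, g₂ ∈ PJ₃ and h ∈ H. -/

import Mathlib

/-- Generators of the cactus group `J₃`. -/
inductive CactusGen : Type
  | s12 | s23 | s13
  deriving DecidableEq

open FreeGroup in
/-- Relators of the cactus group `J₃`:
`s₁₂² = s₂₃² = s₁₃² = 1`, `s₁₂·s₁₃ = s₁₃·s₂₃`, `s₂₃·s₁₃ = s₁₃·s₁₂`. -/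
def cactusRels : Set (FreeGroup CactusGen) :=
  { of .s12 * of .s12,
    of .s23 * of .s23,
    of .s13 * of .s13,
    of .s12 * of .s13 * (of .s13 * of .s23)⁻¹,
    of .s23 * of .s13 * (of .s13 * of .s12)⁻¹ }

/-- The cactus group `J₃` as a presented group. -/
abbrev J3 : Type := PresentedGroup cactusRels

def s12 : J3 := PresentedGroup.of .s12
def s23 : J3 := PresentedGroup.of .s23
def s13 : J3 := PresentedGroup.of .s13

/-- The subgroup `H = J₃^{2}` of `J₃` generated by `s₁₂` and `s₂₃`. -/
def H : Subgroup J3 := Subgroup.closure {s12, s23}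

/-- The images of the generators in the symmetric group on three letters:
`s₁₂ ↦ (1 2)`, `s₂₃ ↦ (2 3)`, `s₁₃ ↦ (1 3)`. -/
def genPerm : CactusGen → Equiv.Perm (Fin 3)
  | .s12 => Equiv.swap 0 1
  | .s23 => Equiv.swap 1 2
  | .s13 => Equiv.swap 0 2

theorem cactusRels_hold : ∀ r ∈ cactusRels, FreeGroup.lift genPerm r = 1 := by
  intro r hr
  simp only [cactusRels, Set.mem_insert_iff, Set.mem_singleton_iff] at hr
  rcases hr with h | h | h | h | h <;> subst h <;>
    simp only [map_mul, map_inv, FreeGroup.lift_apply_of] <;> decide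

/-- The canonical projection `π : J₃ → S₃`; its kernel is the pure cactus group `PJ₃`. -/
def piJ3 : J3 →* Equiv.Perm (Fin 3) := PresentedGroup.toGroup cactusRels_hold

open Classical in
/-- The map `Γ₀ : (g, h) ↦ g·h` if `g·h ∈ H`, and `g·h·s₁₃` otherwise. -/
noncomputable def gamma (g h : J3) : J3 := if g * h ∈ H then g * h else g * h * s13

-- auxiliary lemmas
lemma rel_one {r : FreeGroup CactusGen} (hr : r ∈ cactusRels) :
    PresentedGroup.mk cactusRels r = 1 := by
  change (QuotientGroup.mk r : J3) = 1
  rw [QuotientGroup.eq_one_iff]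
  exact Subgroup.subset_normalClosure hr

lemma s13_sq : s13 * s13 = 1 := by
  have := rel_one (show (FreeGroup.of CactusGen.s13 * FreeGroup.of .s13) ∈ cactusRels by
    simp [cactusRels])
  rw [map_mul] at this
  exact this

lemma rel1 : s12 * s13 = s13 * s23 := by
  have := rel_one (show (FreeGroup.of CactusGen.s12 * FreeGroup.of .s13 *
      (FreeGroup.of CactusGen.s13 * FreeGroup.of .s23)⁻¹) ∈ cactusRels by simp [cactusRels])
  simp only [map_mul, map_inv] at this
  exact mul_inv_eq_one.mp this

lemma rel2 : s23 * s13 = s13 * s12 := by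
  have := rel_one (show (FreeGroup.of CactusGen.s23 * FreeGroup.of .s13 *
      (FreeGroup.of CactusGen.s13 * FreeGroup.of .s12)⁻¹) ∈ cactusRels by simp [cactusRels])
  simp only [map_mul, map_inv] at this
  exact mul_inv_eq_one.mp this

lemma s13_inv : s13⁻¹ = s13 := by
  rw [← mul_eq_one_iff_inv_eq]; exact s13_sq

lemma s12_mem : s12 ∈ H := Subgroup.subset_closure (by simp)
lemma s23_mem : s23 ∈ H := Subgroup.subset_closure (by simp)

lemma conj_s12 : s13 * s12 * s13 = s23 := by
  rw [← rel2, mul_assoc, s13_sq, mul_one]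

lemma conj_s23 : s13 * s23 * s13 = s12 := by
  rw [← rel1, mul_assoc, s13_sq, mul_one]

lemma conj_mem {h : J3} (hh : h ∈ H) : s13 * h * s13 ∈ H := by
  refine Subgroup.closure_induction ?_ ?_ ?_ ?_ hh
  · rintro x (rfl | rfl)
    · rw [conj_s12]; exact s23_mem
    · rw [conj_s23]; exact s12_mem
  · rw [mul_one, s13_sq]; exact H.one_mem
  · intro a b _ _ ha hb
    have e : (s13 * a * s13) * (s13 * b * s13) = s13 * a * (s13 * s13) * b * s13 := by group
    have e2 : s13 * (a * b) * s13 = (s13 * a * s13) * (s13 * b * s13) := by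
      rw [e, s13_sq, mul_one]; group
    rw [e2]; exact H.mul_mem ha hb
  · intro a _ ha
    have e : s13 * a⁻¹ * s13 = (s13 * a * s13)⁻¹ := by
      rw [mul_inv_rev, mul_inv_rev, s13_inv, mul_assoc]
    rw [e]; exact H.inv_mem ha

/-- The key dichotomy subgroup `H ∪ H·s13`. -/
def K : Subgroup J3 where
  carrier := {x | x ∈ H ∨ x * s13 ∈ H}
  one_mem' := Or.inl H.one_mem
  mul_mem' := by
    rintro a b (ha | ha) (hb | hb)
    · exact Or.inl (H.mul_mem ha hb)
    · refine Or.inr ?_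
      have e : a * b * s13 = a * (b * s13) := by group
      rw [e]; exact H.mul_mem ha hb
    · refine Or.inr ?_
      have e : a * b * s13 = (a * s13) * (s13 * b * s13) := by
        rw [show (a * s13) * (s13 * b * s13) = a * (s13 * s13) * b * s13 by group, s13_sq,
          mul_one]
      rw [e]; exact H.mul_mem ha (conj_mem hb)
    · refine Or.inl ?_
      have e : a * b = (a * s13) * (s13 * (b * s13) * s13) := by
        rw [show (a * s13) * (s13 * (b * s13) * s13) =
          a * (s13 * s13) * b * (s13 * s13) by group, s13_sq]
        group
      rw [e]; exact H.mul_mem ha (conj_mem hb)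
  inv_mem' := by
    rintro a (ha | ha)
    · exact Or.inl (H.inv_mem ha)
    · refine Or.inr ?_
      have h1 : (a * s13)⁻¹ ∈ H := H.inv_mem ha
      rw [mul_inv_rev, s13_inv] at h1
      have e : a⁻¹ * s13 = s13 * (s13 * a⁻¹) * s13 := by
        rw [show s13 * (s13 * a⁻¹) * s13 = (s13 * s13) * a⁻¹ * s13 by group, s13_sq, one_mul]
      rw [e]; exact conj_mem h1

lemma dichotomy (x : J3) : x ∈ H ∨ x * s13 ∈ H := by
  refine PresentedGroup.generated_by cactusRels K ?_ x
  intro j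
  cases j
  · exact Or.inl s12_mem
  · exact Or.inl s23_mem
  · refine Or.inr ?_
    show s13 * s13 ∈ H
    rw [s13_sq]; exact H.one_mem

/-- Parity homomorphism target values. -/
def genPar : CactusGen → Multiplicative (ZMod 2)
  | .s12 => 1
  | .s23 => 1
  | .s13 => Multiplicative.ofAdd 1

lemma genPar_rels : ∀ r ∈ cactusRels, FreeGroup.lift genPar r = 1 := by
  intro r hr
  simp only [cactusRels, Set.mem_insert_iff, Set.mem_singleton_iff] at hr
  rcases hr with h | h | h | h | h <;> subst h <;>
    simp only [map_mul, map_inv, FreeGroup.lift_apply_of] <;> decide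

def phi : J3 →* Multiplicative (ZMod 2) := PresentedGroup.toGroup genPar_rels

lemma phi_s13 : phi s13 = Multiplicative.ofAdd 1 := PresentedGroup.toGroup.of genPar_rels

lemma H_le_ker : H ≤ MonoidHom.ker phi := by
  rw [H, Subgroup.closure_le]
  rintro x (rfl | rfl) <;>
    simp only [SetLike.mem_coe, MonoidHom.mem_ker] <;>
    exact PresentedGroup.toGroup.of genPar_rels

lemma s13_not_mem : s13 ∉ H := by
  intro h
  have := H_le_ker h
  rw [MonoidHom.mem_ker, phi_s13] at this
  exact absurd this (by decide)

lemma memFlip {x : J3} (hx : x ∈ H) : x * s13 ∉ H := by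
  intro h
  exact s13_not_mem (by simpa using H.mul_mem (H.inv_mem hx) h)

lemma memFlip' {x : J3} (hx : x ∉ H) : x * s13 ∈ H := (dichotomy x).resolve_left hx

/-- `Γ₀` is well defined (takes values in `H` when `g ∈ PJ₃` and `h ∈ H`)
and defines a group action of `PJ₃ = ker π` on `H`. -/
theorem gamma_action :
    (∀ g ∈ MonoidHom.ker piJ3, ∀ h ∈ H, gamma g h ∈ H) ∧
      (∀ h ∈ H, gamma 1 h = h) ∧
        ∀ g₁ ∈ MonoidHom.ker piJ3, ∀ g₂ ∈ MonoidHom.ker piJ3, ∀ h ∈ H,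
          gamma (g₁ * g₂) h = gamma g₁ (gamma g₂ h) := by
  refine ⟨?_, ?_, ?_⟩
  · intro g _ h _
    unfold gamma
    split
    · assumption
    · exact memFlip' (by assumption)
  · intro h hh
    simp [gamma, hh]
  · intro g₁ _ g₂ _ h _
    by_cases h2 : g₂ * h ∈ H
    · have e2 : gamma g₂ h = g₂ * h := by rw [gamma, if_pos h2]
      rw [e2, gamma, gamma, mul_assoc]
    · have e2 : gamma g₂ h = g₂ * h * s13 := by rw [gamma, if_neg h2]
      rw [e2, gamma, gamma]
      have hA : g₁ * (g₂ * h * s13) = g₁ * (g₂ * h) * s13 := by group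
      by_cases h1 : g₁ * (g₂ * h) ∈ H
      · rw [if_pos (show g₁ * g₂ * h ∈ H by rw [mul_assoc]; exact h1),
          if_neg (show g₁ * (g₂ * h * s13) ∉ H by rw [hA]; exact memFlip h1),
          hA, mul_assoc (g₁ * (g₂ * h)), s13_sq, mul_one]
        group
      · rw [if_neg (show g₁ * g₂ * h ∉ H by rw [mul_assoc]; exact h1),
          if_pos (show g₁ * (g₂ * h * s13) ∈ H by rw [hA]; exact memFlip' h1),
          hA]
        group
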